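/- The exponential generating function G(t,x) = Σ_{n≥0} P_n(x) t^n/n! of the polynomials P_n satisfies the PDE ∂_t G = x G − ∂_x G − x ∂_{xx} G, and is given in closed form by G(t,x) = exp(x tanh t)/cosh t for |t| < π/2. -/

import Mathlib

open Polynomial

/-- The Sheffer-type polynomials `P n = R^n 1` where `(Rf)(x) = x f(x) - f'(x) - x f''(x)`. -/
noncomputable def shefferP : ℕ → Polynomial ℝ
  | 0 => 1
  | n + 1 =>
      X * shefferP n - derivative (shefferP n) - X * derivative (derivative (shefferP n))

/-- The exponential generating function G(t,x) = Σₙ Pₙ(x) tⁿ/n!. -/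
noncomputable def shefferG (t x : ℝ) : ℝ :=
  ∑' n : ℕ, (shefferP n).eval x * t ^ n / (Nat.factorial n)

open MvPolynomial

namespace ShefferAux

lemma pderiv_comm {σ R : Type*} [CommSemiring R] (i j : σ) (p : MvPolynomial σ R) :
    pderiv i (pderiv j p) = pderiv j (pderiv i p) := by
  classical
  induction p using MvPolynomial.induction_on' with
  | monomial s a =>
      rcases eq_or_ne i j with rfl | hij
      · rfl
      · simp only [pderiv_monomial]
        rw [Finsupp.tsub_apply, Finsupp.tsub_apply, Finsupp.single_eq_of_ne hij,
          Finsupp.single_eq_of_ne hij.symm, tsub_zero, tsub_zero, tsub_tsub, tsub_tsub,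
          add_comm]
        ring_nf
  | add p q hp hq => simp [hp, hq]

/-- The operator `T` corresponding to `∂_t` on the prefactor. -/
noncomputable def Top (A : MvPolynomial (Fin 2) ℝ) : MvPolynomial (Fin 2) ℝ :=
  (1 - X 1 ^ 2) * pderiv 1 A + (X 0 * (1 - X 1 ^ 2) - X 1) * A

/-- The operator `R` corresponding to the Sheffer recurrence acting on the prefactor. -/
noncomputable def Rop (A : MvPolynomial (Fin 2) ℝ) : MvPolynomial (Fin 2) ℝ :=
  (X 0 * (1 - X 1 ^ 2) - X 1) * A - (1 + 2 * X 0 * X 1) * pderiv 0 A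
    - X 0 * pderiv 0 (pderiv 0 A)

lemma Top_Rop_comm (A : MvPolynomial (Fin 2) ℝ) : Top (Rop A) = Rop (Top A) := by
  have h01 : pderiv (0 : Fin 2) (X (1 : Fin 2) : MvPolynomial (Fin 2) ℝ) = 0 :=
    pderiv_X_of_ne (by decide)
  have h10 : pderiv (1 : Fin 2) (X (0 : Fin 2) : MvPolynomial (Fin 2) ℝ) = 0 :=
    pderiv_X_of_ne (by decide)
  have h2 : ∀ i : Fin 2, pderiv i (2 : MvPolynomial (Fin 2) ℝ) = 0 := fun i => by
    rw [(map_ofNat MvPolynomial.C 2).symm, pderiv_C]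
  simp only [Top, Rop, map_sub, map_add, pderiv_mul, map_mul, map_one, pderiv_one,
    pderiv_X_self, pderiv_pow, h01, h10, h2, map_zero, pderiv_comm (0 : Fin 2) (1 : Fin 2)]
  ring


/-- The prefactor polynomials. -/
noncomputable def Q : ℕ → MvPolynomial (Fin 2) ℝ
  | 0 => 1
  | n + 1 => Top (Q n)

lemma Rop_Q (n : ℕ) : Rop (Q n) = Q (n + 1) := by
  induction n with
  | zero => simp [Q, Rop, Top, pderiv_one]
  | succ n ih =>
      show Rop (Top (Q n)) = Top (Q (n + 1))
      rw [← Top_Rop_comm, ih]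

/-- Evaluation at `w = 0`, keeping `x` as a polynomial variable. -/
noncomputable def ev : MvPolynomial (Fin 2) ℝ →ₐ[ℝ] Polynomial ℝ :=
  aeval ![Polynomial.X, 0]

lemma ev_X0 : ev (X 0) = Polynomial.X := by simp [ev]
lemma ev_X1 : ev (X 1) = 0 := by simp [ev]
lemma ev_C_apply (a : ℝ) : ev (MvPolynomial.C a) = Polynomial.C a := by simp [ev]

lemma ev_pderiv0 (A : MvPolynomial (Fin 2) ℝ) :
    ev (pderiv 0 A) = derivative (ev A) := by
  induction A using MvPolynomial.induction_on with
  | C a => simp only [pderiv_C, map_zero, ev_C_apply, derivative_C]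
  | add p q hp hq => simp only [map_add, hp, hq]
  | mul_X p i hp =>
      fin_cases i <;> simp only [Fin.zero_eta, Fin.mk_one, Fin.isValue]
      · rw [pderiv_mul, pderiv_X_self, mul_one, map_add, map_mul, map_mul, hp,
          ev_X0, derivative_mul, derivative_X, mul_one, add_comm]
      · rw [pderiv_mul, pderiv_X_of_ne (show (1:Fin 2) ≠ 0 by decide), mul_zero,
          add_zero, map_mul, map_mul, hp, ev_X1, mul_zero, mul_zero, derivative_zero]

lemma ev_Q (n : ℕ) : ev (Q n) = shefferP n := by
  induction n with
  | zero => simp [Q, ev, shefferP]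
  | succ n ih =>
      rw [← Rop_Q, Rop, shefferP]
      simp only [map_sub, map_mul, map_add, map_one, map_pow, ev_pderiv0, ih, ev_X0, ev_X1]
      ring


/-- The complex generating function. -/
noncomputable def fC (x : ℝ) : ℂ → ℂ := fun z => Complex.exp (x * Complex.tanh z) / Complex.cosh z

lemma cosh_ne_zero_ball {z : ℂ} (hz : ‖z‖ < Real.pi / 2) :
    Complex.cosh z ≠ 0 := by
  intro h
  rw [← Complex.cos_mul_I, Complex.cos_eq_zero_iff] at h
  obtain ⟨k, hk⟩ := h
  have habs : ‖z * Complex.I‖ = ‖z‖ := by simp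
  rw [hk] at habs
  have h1 : ‖(2 * (k : ℂ) + 1) * ↑Real.pi / 2‖ =
      |2 * (k : ℝ) + 1| * (Real.pi / 2) := by
    rw [show (2 * (k : ℂ) + 1) * ↑Real.pi / 2 = ((2 * (k:ℝ) + 1) * (Real.pi / 2) : ℝ) by
      push_cast; ring]
    rw [Complex.norm_real, Real.norm_eq_abs, abs_mul, abs_of_pos (by positivity : (0:ℝ) < Real.pi / 2)]
  have hk1 : (1:ℝ) ≤ |2 * (k:ℝ) + 1| := by
    have h2 : (1:ℤ) ≤ |2 * k + 1| := Int.one_le_abs (by omega)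
    calc (1:ℝ) ≤ ((|2 * k + 1| : ℤ) : ℝ) := by exact_mod_cast h2
      _ = |2 * (k:ℝ) + 1| := by rw [Int.cast_abs]; push_cast; ring_nf
  have h3 : Real.pi / 2 ≤ |2 * (k:ℝ) + 1| * (Real.pi / 2) :=
    le_mul_of_one_le_left (by positivity) hk1
  rw [h1] at habs
  linarith

lemma hasDerivAt_ctanh {z : ℂ} (h : Complex.cosh z ≠ 0) :
    HasDerivAt Complex.tanh (1 - Complex.tanh z ^ 2) z := by
  have hd := (Complex.hasDerivAt_sinh z).div (Complex.hasDerivAt_cosh z) h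
  have he : Complex.sinh / Complex.cosh = Complex.tanh := by
    funext w; rw [Pi.div_apply, Complex.tanh_eq_sinh_div_cosh]
  rw [he] at hd
  refine hd.congr_deriv ?_
  symm
  rw [Complex.tanh_eq_sinh_div_cosh]
  field_simp

lemma hasDerivAt_aeval_comp (x : ℝ) (P : MvPolynomial (Fin 2) ℝ) {u : ℂ → ℂ} {u' z : ℂ}
    (hu : HasDerivAt u u' z) :
    HasDerivAt (fun w => aeval ![(x : ℂ), u w] P)
      (aeval ![(x : ℂ), u z] (pderiv 1 P) * u') z := by
  induction P using MvPolynomial.induction_on with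
  | C a =>
      simp only [MvPolynomial.aeval_C, pderiv_C, map_zero, zero_mul]
      exact hasDerivAt_const z _
  | add p q hp hq =>
      simp only [map_add, add_mul]
      exact hp.add hq
  | mul_X p i hp =>
      fin_cases i <;> simp only [Fin.zero_eta, Fin.mk_one, Fin.isValue]
      · have h10 : pderiv (1 : Fin 2) (X (0 : Fin 2) : MvPolynomial (Fin 2) ℝ) = 0 :=
          pderiv_X_of_ne (by decide)
        simp only [map_mul, MvPolynomial.aeval_X, pderiv_mul, h10, mul_zero, add_zero,
          map_add, Matrix.cons_val_zero]
        have := hp.mul_const ((x : ℂ))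
        refine this.congr_deriv ?_
        symm
        ring
      · simp only [map_mul, MvPolynomial.aeval_X, pderiv_mul, pderiv_X_self, mul_one,
          map_add, Matrix.cons_val_one, Matrix.head_cons, Matrix.cons_val_zero]
        have := hp.mul hu
        refine this.congr_deriv ?_
        symm
        ring

lemma hasDerivAt_fC (x : ℝ) {z : ℂ} (h : Complex.cosh z ≠ 0) :
    HasDerivAt (fC x) ((x * (1 - Complex.tanh z ^ 2) - Complex.tanh z) * fC x z) z := by
  have h1 : HasDerivAt (fun z => Complex.exp ((x:ℂ) * Complex.tanh z))
      (Complex.exp ((x:ℂ) * Complex.tanh z) * ((x:ℂ) * (1 - Complex.tanh z ^ 2))) z := by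
    have := ((hasDerivAt_ctanh h).const_mul ((x:ℂ))).cexp
    convert this using 1
    try ring
  have hd := h1.div (Complex.hasDerivAt_cosh z) h
  have : fC x = fun z => Complex.exp ((x:ℂ) * Complex.tanh z) / Complex.cosh z := rfl
  rw [this]
  refine hd.congr_deriv ?_
  symm
  simp only [Complex.tanh_eq_sinh_div_cosh]
  field_simp [fC, Complex.tanh_eq_sinh_div_cosh]
  try ring_nf


lemma abs_lt_of_mem_ball {z : ℂ} (hz : z ∈ Metric.ball (0:ℂ) (Real.pi / 2)) :
    ‖z‖ < Real.pi / 2 := by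
  simpa [Complex.dist_eq] using Metric.mem_ball.mp hz

lemma iteratedDeriv_fC (x : ℝ) (n : ℕ) :
    ∀ z ∈ Metric.ball (0:ℂ) (Real.pi / 2),
      iteratedDeriv n (fC x) z = aeval ![(x:ℂ), Complex.tanh z] (Q n) * fC x z := by
  induction n with
  | zero => intro z hz; simp [Q, iteratedDeriv_zero]
  | succ n ih =>
      intro z hz
      rw [iteratedDeriv_succ]
      have hev : iteratedDeriv n (fC x)
          =ᶠ[nhds z] fun w => aeval ![(x:ℂ), Complex.tanh w] (Q n) * fC x w :=
        Filter.eventuallyEq_of_mem (Metric.isOpen_ball.mem_nhds hz) (fun w hw => ih w hw)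
      rw [hev.deriv_eq]
      have hcosh : Complex.cosh z ≠ 0 := cosh_ne_zero_ball (abs_lt_of_mem_ball hz)
      have hD := (hasDerivAt_aeval_comp x (Q n) (hasDerivAt_ctanh hcosh)).mul
        (hasDerivAt_fC x hcosh)
      rw [(show HasDerivAt (fun w => aeval ![(x:ℂ), Complex.tanh w] (Q n) * fC x w) _ z from hD).deriv]
      show _ = aeval ![(x:ℂ), Complex.tanh z] (Top (Q n)) * fC x z
      simp only [Top, map_add, map_mul, map_sub, map_one, map_pow, MvPolynomial.aeval_X,
        Matrix.cons_val_zero, Matrix.cons_val_one, Matrix.head_cons]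
      ring

lemma aeval_Q_zero (x : ℝ) (n : ℕ) :
    (MvPolynomial.aeval ![(x:ℂ), (0:ℂ)]) (Q n) = (((shefferP n).eval x : ℝ) : ℂ) := by
  have hcomp : (Polynomial.aeval ((x:ℂ))).comp ev = (MvPolynomial.aeval ![(x:ℂ), 0] : MvPolynomial (Fin 2) ℝ →ₐ[ℝ] ℂ) := by
    apply MvPolynomial.algHom_ext
    intro i
    fin_cases i <;> simp [ev]
  calc (MvPolynomial.aeval ![(x:ℂ), (0:ℂ)]) (Q n) = ((Polynomial.aeval ((x:ℂ))).comp ev) (Q n) := by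
        rw [hcomp]
    _ = Polynomial.aeval ((x:ℂ)) (shefferP n) := by rw [AlgHom.comp_apply, ev_Q]
    _ = (((shefferP n).eval x : ℝ) : ℂ) := by
        rw [show ((x:ℂ)) = algebraMap ℝ ℂ x from rfl,
          Polynomial.aeval_algebraMap_apply_eq_algebraMap_eval]
        rfl

lemma closedForm (t x : ℝ) (ht : |t| < Real.pi / 2) :
    shefferG t x = Real.exp (x * Real.tanh t) / Real.cosh t := by
  have hdiff : DifferentiableOn ℂ (fC x) (Metric.ball 0 (Real.pi / 2)) := by
    intro z hz
    exact ((hasDerivAt_fC x (cosh_ne_zero_ball (abs_lt_of_mem_ball hz))).differentiableAt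
      ).differentiableWithinAt
  have hmem : (t:ℂ) ∈ Metric.ball (0:ℂ) (Real.pi / 2) := by
    simp only [Metric.mem_ball, Complex.dist_eq, sub_zero, Complex.norm_real, Real.norm_eq_abs]
    exact ht
  have hmem0 : (0:ℂ) ∈ Metric.ball (0:ℂ) (Real.pi / 2) := by
    simp only [Metric.mem_ball, dist_self]
    positivity
  have hsum := Complex.hasSum_taylorSeries_on_ball hdiff hmem
  have h0 : ∀ n, iteratedDeriv n (fC x) 0 = (((shefferP n).eval x : ℝ) : ℂ) := by
    intro n
    rw [iteratedDeriv_fC x n 0 hmem0, Complex.tanh_zero, aeval_Q_zero]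
    simp [fC]
  have hterm : ∀ n : ℕ, ((Nat.factorial n : ℂ))⁻¹ • ((t:ℂ) - 0) ^ n • iteratedDeriv n (fC x) 0
      = (((shefferP n).eval x * t ^ n / (Nat.factorial n) : ℝ) : ℂ) := by
    intro n
    rw [h0 n, sub_zero, smul_eq_mul, smul_eq_mul]
    push_cast
    ring
  have hval : fC x (t:ℂ) = ((Real.exp (x * Real.tanh t) / Real.cosh t : ℝ) : ℂ) := by
    simp only [fC, Complex.ofReal_div, Complex.ofReal_exp, Complex.ofReal_mul,
      Complex.ofReal_tanh, Complex.ofReal_cosh]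
  rw [funext hterm, hval] at hsum
  have := Complex.hasSum_ofReal.mp hsum
  exact this.tsum_eq


lemma hasDerivAt_rtanh (t : ℝ) : HasDerivAt Real.tanh (1 - Real.tanh t ^ 2) t := by
  have h : Real.cosh t ≠ 0 := (Real.cosh_pos t).ne'
  have hd := (Real.hasDerivAt_sinh t).div (Real.hasDerivAt_cosh t) h
  have he : Real.sinh / Real.cosh = Real.tanh := by
    funext w; rw [Pi.div_apply, Real.tanh_eq_sinh_div_cosh]
  rw [he] at hd
  refine hd.congr_deriv ?_
  symm
  rw [Real.tanh_eq_sinh_div_cosh]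
  field_simp

lemma hasDerivAt_F_t (x t : ℝ) :
    HasDerivAt (fun s => Real.exp (x * Real.tanh s) / Real.cosh s)
      ((x * (1 - Real.tanh t ^ 2) - Real.tanh t)
        * (Real.exp (x * Real.tanh t) / Real.cosh t)) t := by
  have h : Real.cosh t ≠ 0 := (Real.cosh_pos t).ne'
  have h1 : HasDerivAt (fun s => Real.exp (x * Real.tanh s))
      (Real.exp (x * Real.tanh t) * (x * (1 - Real.tanh t ^ 2))) t := by
    have := ((hasDerivAt_rtanh t).const_mul x).exp
    convert this using 1
    try ring
  have hd := h1.div (Real.hasDerivAt_cosh t) h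
  rw [show (fun s => Real.exp (x * Real.tanh s) / Real.cosh s)
    = (fun s => Real.exp (x * Real.tanh s)) / Real.cosh from rfl]
  refine hd.congr_deriv ?_
  symm
  rw [Real.tanh_eq_sinh_div_cosh]
  field_simp [Real.tanh_eq_sinh_div_cosh]
  try ring_nf

lemma hasDerivAt_F_x (t x : ℝ) :
    HasDerivAt (fun y => Real.exp (y * Real.tanh t) / Real.cosh t)
      (Real.tanh t * (Real.exp (x * Real.tanh t) / Real.cosh t)) x := by
  have h1 : HasDerivAt (fun y => Real.exp (y * Real.tanh t))
      (Real.exp (x * Real.tanh t) * Real.tanh t) x := by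
    simpa using ((hasDerivAt_id x).mul_const (Real.tanh t)).exp
  have := h1.div_const (Real.cosh t)
  refine this.congr_deriv ?_
  symm
  ring

end ShefferAux

/-- G satisfies the PDE ∂ₜG = xG - ∂ₓG - x ∂ₓₓG and equals exp(x tanh t)/cosh t
for |t| < π/2. -/
theorem shefferG_pde_closed_form (t x : ℝ) (ht : |t| < Real.pi / 2) :
    (deriv (fun s => shefferG s x) t
        = x * shefferG t x - deriv (fun y => shefferG t y) x
          - x * deriv (fun y => deriv (fun z => shefferG t z) y) x) ∧
    shefferG t x = Real.exp (x * Real.tanh t) / Real.cosh t := by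
  refine ⟨?_, ShefferAux.closedForm t x ht⟩
  have hopen : IsOpen {s : ℝ | |s| < Real.pi / 2} :=
    isOpen_lt continuous_abs continuous_const
  have hev : (fun s => shefferG s x)
      =ᶠ[nhds t] fun s => Real.exp (x * Real.tanh s) / Real.cosh s :=
    Filter.eventuallyEq_of_mem (hopen.mem_nhds ht)
      (fun s hs => ShefferAux.closedForm s x hs)
  rw [hev.deriv_eq, (ShefferAux.hasDerivAt_F_t x t).deriv]
  have hGx : (fun y => shefferG t y) = fun y => Real.exp (y * Real.tanh t) / Real.cosh t :=
    funext fun y => ShefferAux.closedForm t y ht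
  rw [hGx, (ShefferAux.hasDerivAt_F_x t x).deriv]
  have hGxx : (fun y => deriv (fun y => Real.exp (y * Real.tanh t) / Real.cosh t) y)
      = fun y => Real.tanh t * (Real.exp (y * Real.tanh t) / Real.cosh t) :=
    funext fun y => (ShefferAux.hasDerivAt_F_x t y).deriv
  rw [hGxx]
  have h2 : HasDerivAt (fun y => Real.tanh t * (Real.exp (y * Real.tanh t) / Real.cosh t))
      (Real.tanh t * (Real.tanh t * (Real.exp (x * Real.tanh t) / Real.cosh t))) x :=
    (ShefferAux.hasDerivAt_F_x t x).const_mul (Real.tanh t)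
  rw [h2.deriv, ShefferAux.closedForm t x ht]
  ring
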